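/- Let G be a connected graph with at least two vertices and let n ≥ 3 be an integer. If n²·λ′(G) > n·ξ(G) + 2(n−1), then the direct product G × T_n is super restricted edge-connected. -/

import Mathlib

set_option linter.unusedSectionVars false
set_option maxHeartbeats 1000000
open Finset


open SimpleGraph

/-- The direct (tensor/Kronecker) product of two simple graphs:
`(u₁, v₁)` and `(u₂, v₂)` are adjacent iff `u₁u₂ ∈ E(G)` and `v₁v₂ ∈ E(H)`. -/
def tensorProd {α β : Type*} (G : SimpleGraph α) (H : SimpleGraph β) :
    SimpleGraph (α × β) where
  Adj x y := G.Adj x.1 y.1 ∧ H.Adj x.2 y.2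
  symm := ⟨fun _ _ h => ⟨h.1.symm, h.2.symm⟩⟩
  loopless := ⟨fun _ h => G.irrefl h.1⟩

/-- The direct product `G × Tₙ` of a simple graph `G` with the total graph `Tₙ`
(the complete graph `Kₙ` with a loop added at every vertex):  since `Tₙ` has all
possible edges and loops, `(u₁, v₁)` is adjacent to `(u₂, v₂)` iff `u₁u₂ ∈ E(G)`. -/
def totalProd {α : Type*} (G : SimpleGraph α) (n : ℕ) :
    SimpleGraph (α × Fin n) where
  Adj x y := G.Adj x.1 y.1
  symm := ⟨fun _ _ h => h.symm⟩
  loopless := ⟨fun _ h => G.irrefl h⟩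

/-- The direct product `K₂ × Kₙ`. -/
def K2timesKn (n : ℕ) : SimpleGraph (Fin 2 × Fin n) :=
  tensorProd (completeGraph (Fin 2)) (completeGraph (Fin n))

/-- The direct product `K₂ × Tₙ` (isomorphic to the complete bipartite graph `K_{n,n}`). -/
def K2timesTn (n : ℕ) : SimpleGraph (Fin 2 × Fin n) :=
  totalProd (completeGraph (Fin 2)) n

/-- `[A, V ∖ A]` : the set of edges of `G` with exactly one endpoint in `A`. -/
def cutEdges {α : Type*} (G : SimpleGraph α) (A : Set α) : Set (Sym2 α) :=
  {e | e ∈ G.edgeSet ∧ ∃ u v, e = s(u, v) ∧ u ∈ A ∧ v ∉ A}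

/-- `F` is an edge-cut of `G`: a set of edges whose deletion disconnects `G`. -/
def IsEdgeCut {α : Type*} (G : SimpleGraph α) (F : Set (Sym2 α)) : Prop :=
  F ⊆ G.edgeSet ∧ ¬ (G.deleteEdges F).Connected

/-- The edge-connectivity `λ(G)`: the minimum cardinality of an edge-cut. -/
noncomputable def edgeConn {α : Type*} (G : SimpleGraph α) : ℕ :=
  sInf {k | ∃ F : Finset (Sym2 α), IsEdgeCut G ↑F ∧ F.card = k}

/-- `G` is super edge-connected (super-λ): every minimum edge-cut is exactly the
set of edges incident with some vertex. -/
def SuperEdgeConnected {α : Type*} (G : SimpleGraph α) : Prop :=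
  ∀ F : Finset (Sym2 α), IsEdgeCut G ↑F → F.card = edgeConn G →
    ∃ v, (F : Set (Sym2 α)) = G.incidenceSet v

/-- `F` is a restricted edge-cut of `G`: its deletion disconnects `G` and every
connected component of `G − F` has at least two vertices. -/
def IsRestrictedEdgeCut {α : Type*} (G : SimpleGraph α) (F : Set (Sym2 α)) : Prop :=
  F ⊆ G.edgeSet ∧ ¬ (G.deleteEdges F).Connected ∧
    ∀ c : (G.deleteEdges F).ConnectedComponent, c.supp.Nontrivial

/-- The restricted edge-connectivity `λ'(G) : ℕ∞`: the minimum cardinality of a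
restricted edge-cut, and `+∞` (`⊤`) if no restricted edge-cut exists. -/
noncomputable def restrictedEdgeConn {α : Type*} (G : SimpleGraph α) : ℕ∞ :=
  sInf {k : ℕ∞ | ∃ F : Finset (Sym2 α), IsRestrictedEdgeCut G ↑F ∧ (F.card : ℕ∞) = k}

/-- `G` is super restricted edge-connected (super-λ'): every minimum restricted
edge-cut isolates an edge, i.e. some component of `G − F` is a single edge. -/
def SuperRestrictedEdgeConnected {α : Type*} (G : SimpleGraph α) : Prop :=
  ∀ F : Finset (Sym2 α), IsRestrictedEdgeCut G ↑F →
    (F.card : ℕ∞) = restrictedEdgeConn G →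
    ∃ u v, (G.deleteEdges ↑F).Adj u v ∧
      ((G.deleteEdges ↑F).connectedComponentMk u).supp = {u, v}

/-- The minimum edge-degree `ξ(G) = min { d(u) + d(v) − 2 : uv ∈ E(G) }`. -/
noncomputable def minEdgeDegree {α : Type*} (G : SimpleGraph α) : ℕ :=
  sInf {k | ∃ u v, G.Adj u v ∧ (G.neighborSet u).ncard + (G.neighborSet v).ncard - 2 = k}


open SimpleGraph Finset

section Helpers
variable {α : Type*} {Gd : SimpleGraph α}

private lemma reachable_mem_closed {K : Set α} (hcl : ∀ ⦃p q⦄, Gd.Adj p q → p ∈ K → q ∈ K)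
    {x y : α} (h : Gd.Reachable x y) (hx : x ∈ K) : y ∈ K := by
  obtain ⟨w⟩ := h
  induction w with
  | nil => exact hx
  | cons h p ih => exact ih (hcl h hx)

private lemma supp_subset_closed {K : Set α} (hcl : ∀ ⦃p q⦄, Gd.Adj p q → p ∈ K → q ∈ K)
    {x : α} (hx : x ∈ K) : (Gd.connectedComponentMk x).supp ⊆ K := by
  intro y hy
  rw [ConnectedComponent.mem_supp_iff] at hy
  exact reachable_mem_closed hcl (ConnectedComponent.exact hy).symm hx

private lemma exists_adj_of_mem_reach {x y : α} (h : Gd.Reachable x y) (hxy : x ≠ y) :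
    ∃ z, Gd.Adj x z := by
  obtain ⟨w⟩ := h
  cases w with
  | nil => exact absurd rfl hxy
  | cons h p => exact ⟨_, h⟩

private lemma exists_adj_of_supp_nontrivial {x : α}
    (h : (Gd.connectedComponentMk x).supp.Nontrivial) : ∃ y, Gd.Adj x y := by
  obtain ⟨a, ha, b, hb, hab⟩ := h
  rw [ConnectedComponent.mem_supp_iff] at ha hb
  rcases eq_or_ne x a with rfl | hxa
  · exact exists_adj_of_mem_reach (ConnectedComponent.exact hb).symm (fun h => hab (h ▸ rfl))
  · exact exists_adj_of_mem_reach (ConnectedComponent.exact ha).symm hxa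

private lemma nontrivial_supp_of_forall_adj (h : ∀ x : α, ∃ y, Gd.Adj x y)
    (c : Gd.ConnectedComponent) : c.supp.Nontrivial := by
  obtain ⟨x, rfl⟩ := c.exists_rep
  obtain ⟨y, hy⟩ := h x
  exact ⟨x, rfl, y, (ConnectedComponent.mem_supp_iff _ _).2
    (ConnectedComponent.connectedComponentMk_eq_of_adj hy.symm), hy.ne⟩

private lemma not_connected_of_closed {K : Set α} (hcl : ∀ ⦃p q⦄, Gd.Adj p q → p ∈ K → q ∈ K)
    {x y : α} (hx : x ∈ K) (hy : y ∉ K) : ¬ Gd.Connected := by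
  intro h
  exact hy (reachable_mem_closed hcl (h.preconnected x y) hx)

private lemma sym2_image_card [DecidableEq α] (T : Finset (α × α)) (P : Set α)
    (hT : ∀ p ∈ T, p.1 ∈ P ∧ p.2 ∉ P) :
    (T.image fun p => s(p.1, p.2)).card = T.card := by
  refine Finset.card_image_of_injOn ?_
  intro p hp p' hp' h
  obtain ⟨h1, h2⟩ := hT p hp
  obtain ⟨h1', h2'⟩ := hT p' hp'
  rcases Sym2.eq_iff.1 h with ⟨ha, hb⟩ | ⟨ha, hb⟩
  · exact Prod.ext ha hb
  · exact absurd (ha ▸ h1) h2'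

end Helpers

section Count
variable {V : Type*} [Fintype V] [DecidableEq V]

private def aCard {n : ℕ} (A : Finset (V × Fin n)) (u : V) : ℕ :=
  (Finset.univ.filter fun i : Fin n => (u, i) ∈ A).card

private def qa (G : SimpleGraph V) [DecidableRel G.Adj] (n : ℕ) (a : V → ℕ)
    (u v : V) : ℕ :=
  if G.Adj u v then a u * (n - a v) else 0

private def crossPairs (G : SimpleGraph V) [DecidableRel G.Adj] (n : ℕ)
    (A : Finset (V × Fin n)) : Finset ((V × Fin n) × (V × Fin n)) :=
  Finset.univ.filter fun p => G.Adj p.1.1 p.2.1 ∧ p.1 ∈ A ∧ p.2 ∉ A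

omit [Fintype V] in
private lemma aCard_le {n : ℕ} (A : Finset (V × Fin n)) (u : V) : aCard A u ≤ n := by
  classical
  simpa [aCard] using (Finset.card_filter_le Finset.univ (fun i : Fin n => (u, i) ∈ A))

omit [Fintype V] in
private lemma aCard_pos {n : ℕ} (A : Finset (V × Fin n)) (u : V) :
    1 ≤ aCard A u ↔ ∃ i, (u,i) ∈ A := by
  rw [aCard]
  constructor
  · intro h
    obtain ⟨i, hi⟩ := Finset.card_pos.1 h
    exact ⟨i, (Finset.mem_filter.1 hi).2⟩
  · rintro ⟨i, hi⟩
    exact Finset.card_pos.2 ⟨i, Finset.mem_filter.2 ⟨Finset.mem_univ _, hi⟩⟩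

omit [Fintype V] in
private lemma aCard_lt {n : ℕ} (A : Finset (V × Fin n)) (u : V) :
    aCard A u < n ↔ ∃ i, (u,i) ∉ A := by
  constructor
  · intro h
    by_contra hcon
    push_neg at hcon
    have : (Finset.univ.filter fun i : Fin n => (u, i) ∈ A) = Finset.univ := by
      ext i
      simp [hcon i]
    rw [aCard, this, Finset.card_univ, Fintype.card_fin] at h
    omega
  · rintro ⟨i, hi⟩
    have hss : (Finset.univ.filter fun i : Fin n => (u, i) ∈ A) ⊂ Finset.univ := by
      refine ⟨Finset.subset_univ _, fun hsub => hi ?_⟩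
      exact (Finset.mem_filter.1 (hsub (Finset.mem_univ i))).2
    have := Finset.card_lt_card hss
    rwa [Finset.card_univ, Fintype.card_fin] at this

omit [Fintype V] in
private lemma aCard_unique_mem {n : ℕ} {A : Finset (V × Fin n)} {u : V} {i l : Fin n}
    (h : aCard A u ≤ 1) (hi : (u,i) ∈ A) (hl : (u,l) ∈ A) : i = l := by
  refine Finset.card_le_one.1 h i ?_ l ?_
  · exact Finset.mem_filter.2 ⟨Finset.mem_univ _, hi⟩
  · exact Finset.mem_filter.2 ⟨Finset.mem_univ _, hl⟩

omit [Fintype V] in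
private lemma aCard_unique_not {n : ℕ} {A : Finset (V × Fin n)} {u : V} {i l : Fin n}
    (h : n ≤ aCard A u + 1) (hi : (u,i) ∉ A) (hl : (u,l) ∉ A) : i = l := by
  have h2 := Finset.card_filter_add_card_filter_not
    (s := (Finset.univ : Finset (Fin n))) (fun i : Fin n => (u,i) ∈ A)
  rw [Finset.card_univ, Fintype.card_fin] at h2
  have h3 : (Finset.univ.filter (fun i : Fin n => ¬ (u,i) ∈ A)).card ≤ 1 := by
    have h4 : aCard A u = (Finset.univ.filter (fun i : Fin n => (u,i) ∈ A)).card := rfl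
    omega
  refine Finset.card_le_one.1 h3 i ?_ l ?_
  · exact Finset.mem_filter.2 ⟨Finset.mem_univ _, hi⟩
  · exact Finset.mem_filter.2 ⟨Finset.mem_univ _, hl⟩

private lemma crossPairs_card (G : SimpleGraph V) [DecidableRel G.Adj] (n : ℕ)
    (A : Finset (V × Fin n)) :
    (crossPairs G n A).card = ∑ u : V, ∑ v : V, qa G n (aCard A) u v := by
  classical
  rw [crossPairs, Finset.card_filter]
  rw [Fintype.sum_prod_type]
  rw [Fintype.sum_prod_type]
  refine Finset.sum_congr rfl fun u _ => ?_
  calc ∑ i : Fin n, ∑ y : V × Fin n, (if G.Adj u y.1 ∧ (u,i) ∈ A ∧ y ∉ A then (1:ℕ) else 0)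
      = ∑ i : Fin n, ∑ v : V, ∑ j : Fin n, (if G.Adj u v ∧ (u,i) ∈ A ∧ (v,j) ∉ A then (1:ℕ) else 0) := by
        refine Finset.sum_congr rfl fun i _ => ?_
        rw [Fintype.sum_prod_type]
    _ = ∑ v : V, ∑ i : Fin n, ∑ j : Fin n, (if G.Adj u v ∧ (u,i) ∈ A ∧ (v,j) ∉ A then (1:ℕ) else 0) :=
        Finset.sum_comm
    _ = ∑ v : V, qa G n (aCard A) u v := by
        refine Finset.sum_congr rfl fun v _ => ?_
        by_cases hadj : G.Adj u v
        · have hsplit : ∀ i j : Fin n, (if G.Adj u v ∧ (u,i) ∈ A ∧ (v,j) ∉ A then (1:ℕ) else 0)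
              = (if (u,i) ∈ A then (1:ℕ) else 0) * (if (v,j) ∉ A then (1:ℕ) else 0) := by
            intro i j
            by_cases h1 : (u,i) ∈ A <;> by_cases h2 : (v,j) ∈ A <;> simp [hadj, h1, h2]
          simp only [hsplit]
          rw [← Finset.sum_mul_sum]
          have hA : (∑ i : Fin n, if (u,i) ∈ A then (1:ℕ) else 0) = aCard A u := by
            rw [aCard, Finset.card_filter]
          have hB : (∑ j : Fin n, if (v,j) ∉ A then (1:ℕ) else 0) = n - aCard A v := by
            have h2 := Finset.card_filter_add_card_filter_not
              (s := (Finset.univ : Finset (Fin n))) (fun j : Fin n => (v,j) ∈ A)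
            have h3 : (∑ j : Fin n, if (v,j) ∉ A then (1:ℕ) else 0)
                = (Finset.univ.filter (fun j : Fin n => ¬ (v,j) ∈ A)).card :=
              (Finset.card_filter _ _).symm
            have h4 : aCard A v = (Finset.univ.filter (fun j : Fin n => (v,j) ∈ A)).card := rfl
            rw [h3, h4]
            simp only [Finset.card_univ, Fintype.card_fin] at h2
            omega
          rw [hA, hB, qa, if_pos hadj]
        · simp [qa, hadj]

end Count

section Core
variable {V : Type*} [Fintype V] [DecidableEq V]



private def gv (n : ℕ) (a : V → ℕ) (x y : V) : ℕ :=
  a x * (n - a y) + a y * (n - a x)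

omit [Fintype V] [DecidableEq V] in
private lemma gv_comm (n : ℕ) (a : V → ℕ) (x y : V) : gv n a x y = gv n a y x :=
  Nat.add_comm _ _

omit [Fintype V] [DecidableEq V] in
private lemma qa_add_qa (G : SimpleGraph V) [DecidableRel G.Adj] (n : ℕ) (a : V → ℕ)
    {u v : V} (h : G.Adj u v) : qa G n a u v + qa G n a v u = gv n a u v := by
  simp [qa, gv, h, h.symm]

private lemma sum_pairs_at (G : SimpleGraph V) [DecidableRel G.Adj] (n : ℕ) (a : V → ℕ)
    (u : V) (t : Finset V) (ht : t ⊆ G.neighborFinset u) :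
    ∑ p ∈ ((t.image fun w => (u,w)) ∪ (t.image fun w => (w,u))), qa G n a p.1 p.2
      = ∑ w ∈ t, gv n a u w := by
  have hdisj : Disjoint (t.image fun w => (u,w)) (t.image fun w => (w,u)) := by
    rw [Finset.disjoint_left]
    rintro ⟨x, y⟩ hx hy
    simp only [Finset.mem_image, Prod.mk.injEq] at hx hy
    obtain ⟨w, hw, rfl, rfl⟩ := hx
    obtain ⟨w', hw', rfl, h2⟩ := hy
    exact G.irrefl (G.mem_neighborFinset .. |>.1 (h2 ▸ ht hw'))
  rw [Finset.sum_union hdisj,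
    Finset.sum_image (by intro x _ y _ h; exact (Prod.mk.injEq .. ▸ h).2),
    Finset.sum_image (by intro x _ y _ h; exact (Prod.mk.injEq .. ▸ h).1)]
  rw [← Finset.sum_add_distrib]
  refine Finset.sum_congr rfl fun w hw => ?_
  exact qa_add_qa G n a ((G.mem_neighborFinset ..).1 (ht hw))

private lemma two_vertex_bound (G : SimpleGraph V) [DecidableRel G.Adj] (n : ℕ) (a : V → ℕ)
    {u v : V} (huv : u ≠ v) :
    (∑ w ∈ G.neighborFinset u, gv n a u w)
      + ∑ w ∈ (G.neighborFinset v).erase u, gv n a v w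
      ≤ ∑ x : V, ∑ y : V, qa G n a x y := by
  classical
  have hEs : (∑ x : V, ∑ y : V, qa G n a x y)
      = ∑ p ∈ (Finset.univ ×ˢ Finset.univ : Finset (V × V)), qa G n a p.1 p.2 := by
    rw [Finset.sum_product]
  set Nu := G.neighborFinset u
  set Nv := (G.neighborFinset v).erase u
  set Tu : Finset (V × V) := (Nu.image fun w => (u,w)) ∪ (Nu.image fun w => (w,u)) with hTu
  set Tv : Finset (V × V) := (Nv.image fun w => (v,w)) ∪ (Nv.image fun w => (w,v)) with hTv
  have hmemTu : ∀ p ∈ Tu, p.1 = u ∨ p.2 = u := by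
    rintro ⟨x,y⟩ hp
    simp only [hTu, Finset.mem_union, Finset.mem_image, Prod.mk.injEq] at hp
    rcases hp with ⟨w,_,rfl,rfl⟩ | ⟨w,_,rfl,rfl⟩
    · exact Or.inl rfl
    · exact Or.inr rfl
  have hmemTv : ∀ p ∈ Tv, p.1 ≠ u ∧ p.2 ≠ u := by
    rintro ⟨x,y⟩ hp
    simp only [hTv, Finset.mem_union, Finset.mem_image, Prod.mk.injEq] at hp
    rcases hp with ⟨w,hw,rfl,rfl⟩ | ⟨w,hw,rfl,rfl⟩
    · exact ⟨huv.symm, Finset.ne_of_mem_erase hw⟩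
    · exact ⟨Finset.ne_of_mem_erase hw, huv.symm⟩
  have hdisj : Disjoint Tu Tv := by
    rw [Finset.disjoint_left]
    intro p hp hp'
    rcases hmemTu p hp with h | h
    · exact (hmemTv p hp').1 h
    · exact (hmemTv p hp').2 h
  calc (∑ w ∈ Nu, gv n a u w) + ∑ w ∈ Nv, gv n a v w
      = ∑ p ∈ Tu ∪ Tv, qa G n a p.1 p.2 := by
        rw [Finset.sum_union hdisj,
          sum_pairs_at G n a u Nu (Finset.Subset.refl _),
          sum_pairs_at G n a v Nv (Finset.erase_subset _ _)]
    _ ≤ ∑ p ∈ (Finset.univ ×ˢ Finset.univ : Finset (V × V)), qa G n a p.1 p.2 := by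
        apply Finset.sum_le_sum_of_subset
        intro p _
        simp [Finset.mem_product]
    _ = _ := hEs.symm

private lemma row_eq (G : SimpleGraph V) [DecidableRel G.Adj] (n : ℕ) (a : V → ℕ) (u : V) :
    ∑ v : V, qa G n a u v = ∑ w ∈ G.neighborFinset u, a u * (n - a w) := by
  have h1 : G.neighborFinset u = Finset.univ.filter (fun w => G.Adj u w) :=
    G.neighborFinset_eq_filter
  rw [h1, Finset.sum_filter]
  exact Finset.sum_congr rfl fun v _ => rfl

-- arithmetic lemmas
private lemma ineq_base {n x y : ℕ} (hx1 : 1 ≤ x) (hx2 : x < n) (hy : y ≤ n) :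
    n ≤ x * (n - y) + y * (n - x) := by
  have h1 : 1 * (n - y) ≤ x * (n - y) := Nat.mul_le_mul_right _ hx1
  have h2 : y * 1 ≤ y * (n - x) := Nat.mul_le_mul_left _ (by omega)
  rw [one_mul] at h1
  rw [mul_one] at h2
  have h3 : n - y + y = n := Nat.sub_add_cancel hy
  linarith

private lemma ineq_two {n x y : ℕ} (hx1 : 2 ≤ x) (hx2 : x + 2 ≤ n) (hy : y ≤ n) :
    2 * n ≤ x * (n - y) + y * (n - x) := by
  have h1 : 2 * (n - y) ≤ x * (n - y) := Nat.mul_le_mul_right _ hx1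
  have h2 : y * 2 ≤ y * (n - x) := Nat.mul_le_mul_left _ (by omega)
  have h3 : n - y + y = n := Nat.sub_add_cancel hy
  nlinarith

private lemma ineq_one {n y : ℕ} (hn : 3 ≤ n) (hy1 : 1 ≤ y) (hy : y ≤ n) :
    2 * n - 2 ≤ 1 * (n - y) + y * (n - 1) := by
  have h2 : y * (n-1) = y * (n - 2) + y := by
    have : n - 1 = (n - 2) + 1 := by omega
    rw [this, Nat.mul_add, mul_one]
  have h4 : 1 * (n - 2) ≤ y * (n - 2) := Nat.mul_le_mul_right _ hy1
  omega

private lemma ineq_onem {n y : ℕ} (hn : 3 ≤ n) (hy1 : y = n - 1) :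
    2 * n - 1 ≤ 1 * (n - y) + y * (n - 1) := by
  subst hy1
  have h2 : (n-1) * (n-1) = (n-1)*(n-3) + (n-1)*2 := by
    have : n - 1 = (n - 3) + 2 := by omega
    nth_rewrite 2 [this]
    rw [Nat.mul_add]
  have : 1*(n-3) ≤ (n-1)*(n-3) := Nat.mul_le_mul_right _ (by omega)
  omega

private lemma ineq_nm1 {n y : ℕ} (hn : 3 ≤ n) (hy : y ≤ n - 1) :
    2 * n - 2 ≤ (n-1) * (n - y) + y * (n - (n-1)) := by
  have h0 : n - (n - 1) = 1 := by omega
  rw [h0, mul_one]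
  have h1 : 1 ≤ n - y := by omega
  have h2 : (n-1) * (n - y) = (n-2) * (n-y) + (n - y) := by
    have : n - 1 = (n-2) + 1 := by omega
    rw [this, Nat.add_mul, one_mul]
  have h3 : (n-2) * 1 ≤ (n-2)*(n-y) := Nat.mul_le_mul_left _ h1
  omega

private lemma ineq_min {n x e f : ℕ} (hx : x ≤ n) :
    n * (Nat.min e f) ≤ (n - x) * f + x * e := by
  rcases Nat.le_total e f with h | h
  · have h1 : (n - x) * e ≤ (n - x) * f := Nat.mul_le_mul_left _ h
    have h2 : (n - x) * e + x * e = n * e := by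
      rw [← Nat.add_mul]
      congr 1
      omega
    have : Nat.min e f = e := Nat.min_eq_left h
    rw [this]
    linarith
  · have h1 : x * f ≤ x * e := Nat.mul_le_mul_left _ h
    have h2 : (n - x) * f + x * f = n * f := by
      rw [← Nat.add_mul]
      congr 1
      omega
    have : Nat.min e f = f := Nat.min_eq_right h
    rw [this]
    linarith

private lemma ineq_ef {n x e f : ℕ} (hx1 : 1 ≤ x) (hx2 : x < n) (he : 1 ≤ e) (hf : 1 ≤ f) :
    n * ((e + f) + (n - 2)) ≤ e * (x * n) + f * (n * (n - x)) := by
  obtain ⟨e', rfl⟩ : ∃ e', e = 1 + e' := ⟨e - 1, by omega⟩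
  obtain ⟨f', rfl⟩ : ∃ f', f = 1 + f' := ⟨f - 1, by omega⟩
  obtain ⟨x', rfl⟩ : ∃ x', x = 1 + x' := ⟨x - 1, by omega⟩
  obtain ⟨b', hb⟩ : ∃ b', n = 2 + x' + b' := ⟨n - 2 - x', by omega⟩
  subst hb
  have h1 : 2 + x' + b' - (1 + x') = 1 + b' := by omega
  have h2 : 2 + x' + b' - 2 = x' + b' := by omega
  rw [h1, h2]
  ring_nf
  nlinarith [Nat.zero_le (e' * x'), Nat.zero_le (f' * b')]

/-- Case A with an extra heavy edge `u w0`: concludes the degree-sum bound. -/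
private lemma caseA1 (G : SimpleGraph V) [DecidableRel G.Adj] (n : ℕ) (a : V → ℕ)
    (hn : 3 ≤ n)
    {u v w0 : V} (huv : G.Adj u v) (hw0 : w0 ∈ (G.neighborFinset u).erase v)
    (hgv : 2*n - 2 ≤ gv n a u v) (hgw : 2*n - 2 ≤ gv n a u w0)
    (hsplitu : ∀ w ∈ G.neighborFinset u, n ≤ gv n a u w)
    (hsplitv : ∀ w ∈ G.neighborFinset v, n ≤ gv n a v w) :
    n * ((G.neighborFinset u).card + (G.neighborFinset v).card)
      ≤ (∑ x : V, ∑ y : V, qa G n a x y) + 1 := by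
  have hvNu : v ∈ G.neighborFinset u := (G.mem_neighborFinset ..).2 huv
  have hbound := two_vertex_bound G n a (G.ne_of_adj huv)
  -- split off v, then w0, from the sum over N u
  have h1 : ∑ w ∈ G.neighborFinset u, gv n a u w
      = gv n a u v + ∑ w ∈ (G.neighborFinset u).erase v, gv n a u w :=
    (Finset.add_sum_erase _ _ hvNu).symm
  have h2 : ∑ w ∈ (G.neighborFinset u).erase v, gv n a u w
      = gv n a u w0 + ∑ w ∈ ((G.neighborFinset u).erase v).erase w0, gv n a u w :=
    (Finset.add_sum_erase _ _ hw0).symm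
  have h3 : n * (((G.neighborFinset u).erase v).erase w0).card
      ≤ ∑ w ∈ ((G.neighborFinset u).erase v).erase w0, gv n a u w := by
    calc n * (((G.neighborFinset u).erase v).erase w0).card
        = (((G.neighborFinset u).erase v).erase w0).card * n := Nat.mul_comm _ _
      _ ≤ _ := by
          refine Finset.card_nsmul_le_sum _ _ _ fun w hw => ?_
          exact hsplitu w (Finset.mem_of_mem_erase (Finset.mem_of_mem_erase hw))
  have h4 : n * ((G.neighborFinset v).erase u).card
      ≤ ∑ w ∈ (G.neighborFinset v).erase u, gv n a v w := by
    calc n * ((G.neighborFinset v).erase u).card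
        = ((G.neighborFinset v).erase u).card * n := Nat.mul_comm _ _
      _ ≤ _ := by
          refine Finset.card_nsmul_le_sum _ _ _ fun w hw => ?_
          exact hsplitv w (Finset.mem_of_mem_erase hw)
  -- cardinalities
  have hcu : 2 ≤ (G.neighborFinset u).card := by
    have h5 : 1 ≤ ((G.neighborFinset u).erase v).card := Finset.card_pos.2 ⟨w0, hw0⟩
    rw [Finset.card_erase_of_mem hvNu] at h5
    omega
  have hcv : 1 ≤ (G.neighborFinset v).card :=
    Finset.card_pos.2 ⟨u, (G.mem_neighborFinset ..).2 huv.symm⟩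
  have hc1 : (((G.neighborFinset u).erase v).erase w0).card
      = (G.neighborFinset u).card - 2 := by
    rw [Finset.card_erase_of_mem hw0, Finset.card_erase_of_mem hvNu]
    omega
  have hc2 : ((G.neighborFinset v).erase u).card = (G.neighborFinset v).card - 1 := by
    rw [Finset.card_erase_of_mem ((G.mem_neighborFinset ..).2 huv.symm)]
  set du := (G.neighborFinset u).card
  set dv := (G.neighborFinset v).card
  rw [hc1] at h3
  rw [hc2] at h4
  have e1 : n * (du - 2) + n * 2 = n * du := by
    have h : n * ((du - 2) + 2) = n * du := by rw [Nat.sub_add_cancel hcu]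
    rw [Nat.mul_add] at h
    exact h
  have e2 : n * (dv - 1) + n * 1 = n * dv := by
    have h : n * ((dv - 1) + 1) = n * dv := by rw [Nat.sub_add_cancel hcv]
    rw [Nat.mul_add] at h
    exact h
  have e3 : n * (du + dv) = n * du + n * dv := Nat.mul_add ..
  have h2n : 2*n - 2 + 2 = 2*n := by omega
  linarith


/-- Case A with a heavy edge `u v` (≥ 2n−1): concludes the degree-sum bound. -/
private lemma caseA0 (G : SimpleGraph V) [DecidableRel G.Adj] (n : ℕ) (a : V → ℕ)
    (hn : 3 ≤ n)
    {u v : V} (huv : G.Adj u v)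
    (hgv : 2*n - 1 ≤ gv n a u v)
    (hsplitu : ∀ w ∈ G.neighborFinset u, n ≤ gv n a u w)
    (hsplitv : ∀ w ∈ G.neighborFinset v, n ≤ gv n a v w) :
    n * ((G.neighborFinset u).card + (G.neighborFinset v).card)
      ≤ (∑ x : V, ∑ y : V, qa G n a x y) + 1 := by
  have hvNu : v ∈ G.neighborFinset u := (G.mem_neighborFinset ..).2 huv
  have hbound := two_vertex_bound G n a (G.ne_of_adj huv)
  have h1 : ∑ w ∈ G.neighborFinset u, gv n a u w
      = gv n a u v + ∑ w ∈ (G.neighborFinset u).erase v, gv n a u w :=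
    (Finset.add_sum_erase _ _ hvNu).symm
  have h3 : n * ((G.neighborFinset u).erase v).card
      ≤ ∑ w ∈ (G.neighborFinset u).erase v, gv n a u w := by
    calc n * ((G.neighborFinset u).erase v).card
        = ((G.neighborFinset u).erase v).card * n := Nat.mul_comm _ _
      _ ≤ _ := by
          refine Finset.card_nsmul_le_sum _ _ _ fun w hw => ?_
          exact hsplitu w (Finset.mem_of_mem_erase hw)
  have h4 : n * ((G.neighborFinset v).erase u).card
      ≤ ∑ w ∈ (G.neighborFinset v).erase u, gv n a v w := by
    calc n * ((G.neighborFinset v).erase u).card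
        = ((G.neighborFinset v).erase u).card * n := Nat.mul_comm _ _
      _ ≤ _ := by
          refine Finset.card_nsmul_le_sum _ _ _ fun w hw => ?_
          exact hsplitv w (Finset.mem_of_mem_erase hw)
  have hcu : 1 ≤ (G.neighborFinset u).card := Finset.card_pos.2 ⟨v, hvNu⟩
  have hcv : 1 ≤ (G.neighborFinset v).card :=
    Finset.card_pos.2 ⟨u, (G.mem_neighborFinset ..).2 huv.symm⟩
  have hc1 : ((G.neighborFinset u).erase v).card = (G.neighborFinset u).card - 1 :=
    Finset.card_erase_of_mem hvNu
  have hc2 : ((G.neighborFinset v).erase u).card = (G.neighborFinset v).card - 1 :=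
    Finset.card_erase_of_mem ((G.mem_neighborFinset ..).2 huv.symm)
  set du := (G.neighborFinset u).card
  set dv := (G.neighborFinset v).card
  rw [hc1] at h3
  rw [hc2] at h4
  have e1 : n * (du - 1) + n * 1 = n * du := by
    have h : n * ((du - 1) + 1) = n * du := by rw [Nat.sub_add_cancel hcu]
    rw [Nat.mul_add] at h
    exact h
  have e2 : n * (dv - 1) + n * 1 = n * dv := by
    have h : n * ((dv - 1) + 1) = n * dv := by rw [Nat.sub_add_cancel hcv]
    rw [Nat.mul_add] at h
    exact h
  have e3 : n * (du + dv) = n * du + n * dv := Nat.mul_add ..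
  have h2n : 2*n - 1 + 1 = 2*n := by omega
  linarith

/-- Case B1: an "isolated" vertex `v` all of whose neighbours have small/large `a`,
with a split neighbour `w0` whose whole row is heavy. -/
private lemma caseB1 (G : SimpleGraph V) [DecidableRel G.Adj] (n : ℕ) (a : V → ℕ)
    (hn : 3 ≤ n)
    {v w0 : V} (hadjv : G.Adj v w0)
    (hz : ∀ z ∈ (G.neighborFinset v).erase w0, n ≤ gv n a v z)
    (hw : n * ((G.neighborFinset w0).card + (n - 2)) ≤ ∑ z ∈ G.neighborFinset w0, gv n a w0 z) :
    n * ((G.neighborFinset v).card + (G.neighborFinset w0).card)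
      ≤ (∑ x : V, ∑ y : V, qa G n a x y) + 1 := by
  have hbound := two_vertex_bound G n a (G.ne_of_adj hadjv.symm)
  have h4 : n * ((G.neighborFinset v).erase w0).card
      ≤ ∑ z ∈ (G.neighborFinset v).erase w0, gv n a v z := by
    calc n * ((G.neighborFinset v).erase w0).card
        = ((G.neighborFinset v).erase w0).card * n := Nat.mul_comm _ _
      _ ≤ _ := Finset.card_nsmul_le_sum _ _ _ hz
  have hw0Nv : w0 ∈ G.neighborFinset v := (G.mem_neighborFinset ..).2 hadjv
  have hcv : 1 ≤ (G.neighborFinset v).card := Finset.card_pos.2 ⟨w0, hw0Nv⟩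
  have hc2 : ((G.neighborFinset v).erase w0).card = (G.neighborFinset v).card - 1 :=
    Finset.card_erase_of_mem hw0Nv
  set dv := (G.neighborFinset v).card
  set dw := (G.neighborFinset w0).card
  rw [hc2] at h4
  have e2 : n * (dv - 1) + n * 1 = n * dv := by
    have h : n * ((dv - 1) + 1) = n * dv := by rw [Nat.sub_add_cancel hcv]
    rw [Nat.mul_add] at h
    exact h
  have e3 : n * (dv + dw) = n * dv + n * dw := Nat.mul_add ..
  have e4 : n * (dw + (n-2)) = n * dw + n * (n-2) := Nat.mul_add ..
  have e5 : n * 1 ≤ n * (n - 2) := Nat.mul_le_mul_left _ (by omega)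
  linarith



private lemma sum_nbr_swap (G : SimpleGraph V) [DecidableRel G.Adj]
    (X S : Finset V) (c : V → ℕ) :
    ∑ v ∈ X, ∑ w ∈ (G.neighborFinset v).filter (· ∈ S), c w
      = ∑ w ∈ S, c w * (X.filter (fun v => G.Adj v w)).card := by
  have h1 : ∀ v, (G.neighborFinset v).filter (· ∈ S) = S.filter (fun w => G.Adj v w) := by
    intro v
    ext z
    simp only [Finset.mem_filter, SimpleGraph.mem_neighborFinset]
    tauto
  calc ∑ v ∈ X, ∑ w ∈ (G.neighborFinset v).filter (· ∈ S), c w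
      = ∑ v ∈ X, ∑ w ∈ S, if G.Adj v w then c w else 0 := by
        refine Finset.sum_congr rfl fun v _ => ?_
        rw [h1 v, Finset.sum_filter]
    _ = ∑ w ∈ S, ∑ v ∈ X, if G.Adj v w then c w else 0 := Finset.sum_comm
    _ = ∑ w ∈ S, c w * (X.filter (fun v => G.Adj v w)).card := by
        refine Finset.sum_congr rfl fun w _ => ?_
        rw [← Finset.sum_filter, Finset.sum_const, smul_eq_mul, Nat.mul_comm]

private def ocross (G : SimpleGraph V) [DecidableRel G.Adj] (P : Finset V) : Finset (V × V) :=
  (Finset.univ ×ˢ Finset.univ).filter (fun p => G.Adj p.1 p.2 ∧ p.1 ∈ P ∧ p.2 ∉ P)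

private lemma ocross_card (G : SimpleGraph V) [DecidableRel G.Adj] (P : Finset V) :
    (ocross G P).card = ∑ u ∈ P, ((G.neighborFinset u).filter (fun w => w ∉ P)).card := by
  rw [ocross, Finset.card_filter, Finset.sum_product]
  calc ∑ u : V, ∑ v : V, (if G.Adj u v ∧ u ∈ P ∧ v ∉ P then (1:ℕ) else 0)
      = ∑ u : V, (if u ∈ P then ((G.neighborFinset u).filter (fun w => w ∉ P)).card else 0) := by
        refine Finset.sum_congr rfl fun u _ => ?_
        by_cases hu : u ∈ P
        · rw [if_pos hu]
          have h2 : (G.neighborFinset u).filter (fun w => w ∉ P)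
              = Finset.univ.filter (fun v => G.Adj u v ∧ u ∈ P ∧ v ∉ P) := by
            ext z
            simp only [Finset.mem_filter, SimpleGraph.mem_neighborFinset, Finset.mem_univ,
              true_and]
            tauto
          rw [h2, Finset.card_filter]
        · rw [if_neg hu]
          refine Finset.sum_eq_zero fun v _ => ?_
          simp [hu]
    _ = ∑ u ∈ P, ((G.neighborFinset u).filter (fun w => w ∉ P)).card := by
        rw [← Finset.sum_filter]
        congr 1
        ext u
        simp

private lemma ineq_min2 {n x e f : ℕ} (hx : x ≤ n) :
    n ^ 2 * Nat.min e f ≤ n * (n - x) * f + e * (x * n) := by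
  have h := ineq_min (n := n) (x := x) (e := e) (f := f) hx
  have h2 : n * (n * Nat.min e f) ≤ n * ((n - x) * f + x * e) := Nat.mul_le_mul_left _ h
  calc n ^ 2 * Nat.min e f = n * (n * Nat.min e f) := by ring
    _ ≤ n * ((n - x) * f + x * e) := h2
    _ = n * (n - x) * f + e * (x * n) := by ring

private lemma core (G : SimpleGraph V) [DecidableRel G.Adj] (n : ℕ) (a : V → ℕ)
    (hn : 3 ≤ n) (ha : ∀ u, a u ≤ n) (ξ' : ℕ)
    (hξ : ∀ u v, G.Adj u v → ξ' + 2 ≤ (G.neighborFinset u).card + (G.neighborFinset v).card)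
    (Wp : ∀ u, 1 ≤ a u → ∃ w, G.Adj u w ∧ 1 ≤ a w)
    (Wm : ∀ u, a u < n → ∃ w, G.Adj u w ∧ a w < n)
    (T3p : ∀ u v, G.Adj u v → a u = 1 → a v = 1 →
        ∃ w, (G.Adj u w ∨ G.Adj v w) ∧ w ≠ u ∧ w ≠ v ∧ 1 ≤ a w)
    (T3m : ∀ u v, G.Adj u v → a u = n - 1 → a v = n - 1 →
        ∃ w, (G.Adj u w ∨ G.Adj v w) ∧ w ≠ u ∧ w ≠ v ∧ a w < n)
    (hXne : ∃ u, 1 ≤ a u) (hYne : ∃ u, a u < n) :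
    (n * ξ' + 2 * n ≤ (∑ x : V, ∑ y : V, qa G n a x y) + 1) ∨
      ∃ C : Finset (Sym2 V), IsRestrictedEdgeCut G ↑C ∧
        n ^ 2 * C.card ≤ ∑ x : V, ∑ y : V, qa G n a x y := by
  classical
  set Es := ∑ x : V, ∑ y : V, qa G n a x y with hEs
  have hsplitrow : ∀ {p : V}, 1 ≤ a p → a p < n →
      ∀ w ∈ G.neighborFinset p, n ≤ gv n a p w := by
    intro p h1 h2 w _
    exact ineq_base h1 h2 (ha w)
  have hfinal : ∀ {u v : V}, G.Adj u v →
      n * ((G.neighborFinset u).card + (G.neighborFinset v).card) ≤ Es + 1 →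
      n * ξ' + 2 * n ≤ Es + 1 := by
    intro u v hadj hb
    calc n * ξ' + 2 * n = n * (ξ' + 2) := by ring
      _ ≤ n * ((G.neighborFinset u).card + (G.neighborFinset v).card) :=
          Nat.mul_le_mul_left _ (hξ u v hadj)
      _ ≤ Es + 1 := hb
  by_cases hAA : ∃ u v, G.Adj u v ∧ (1 ≤ a u ∧ a u < n) ∧ (1 ≤ a v ∧ a v < n)
  · -- Case A : two adjacent split vertices
    left
    obtain ⟨u, v, huv, hsu, hsv⟩ := hAA
    have hSu := hsplitrow hsu.1 hsu.2
    have hSv := hsplitrow hsv.1 hsv.2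
    by_cases h2u : 2 ≤ a u ∧ a u + 2 ≤ n
    · refine hfinal huv (caseA0 G n a hn huv ?_ hSu hSv)
      have h := ineq_two h2u.1 h2u.2 (ha v)
      simp only [gv]
      omega
    by_cases h2v : 2 ≤ a v ∧ a v + 2 ≤ n
    · refine hfinal huv.symm (caseA0 G n a hn huv.symm ?_ hSv hSu)
      have h := ineq_two h2v.1 h2v.2 (ha u)
      simp only [gv]
      omega
    have hu1 : a u = 1 ∨ a u = n - 1 := by omega
    have hv1 : a v = 1 ∨ a v = n - 1 := by omega
    rcases hu1 with hau | hau <;> rcases hv1 with hav | hav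
    · -- (1,1)
      obtain ⟨w0, hw0or, hw0u, hw0v, hw0a⟩ := T3p u v huv hau hav
      have hguv : 2*n - 2 ≤ gv n a u v := by
        have h := ineq_one (y := a v) hn (by omega) (ha v)
        simp only [gv, hau]
        omega
      rcases hw0or with hw | hw
      · have hw0mem : w0 ∈ (G.neighborFinset u).erase v :=
          Finset.mem_erase.2 ⟨hw0v, (G.mem_neighborFinset ..).2 hw⟩
        have hguw : 2*n - 2 ≤ gv n a u w0 := by
          have h := ineq_one (y := a w0) hn hw0a (ha w0)
          simp only [gv, hau]
          omega
        exact hfinal huv (caseA1 G n a hn huv hw0mem hguv hguw hSu hSv)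
      · have hw0mem : w0 ∈ (G.neighborFinset v).erase u :=
          Finset.mem_erase.2 ⟨hw0u, (G.mem_neighborFinset ..).2 hw⟩
        have hgvw : 2*n - 2 ≤ gv n a v w0 := by
          have h := ineq_one (y := a w0) hn hw0a (ha w0)
          simp only [gv, hav]
          omega
        exact hfinal huv.symm
          (caseA1 G n a hn huv.symm hw0mem ((gv_comm n a u v) ▸ hguv) hgvw hSv hSu)
    · -- (1, n-1)
      refine hfinal huv (caseA0 G n a hn huv ?_ hSu hSv)
      have h := ineq_onem (y := a v) hn hav
      simp only [gv, hau]
      omega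
    · -- (n-1, 1)
      refine hfinal huv.symm (caseA0 G n a hn huv.symm ?_ hSv hSu)
      have h := ineq_onem (y := a u) hn hau
      simp only [gv, hav]
      omega
    · -- (n-1, n-1)
      obtain ⟨w0, hw0or, hw0u, hw0v, hw0a⟩ := T3m u v huv hau hav
      have hguv : 2*n - 2 ≤ gv n a u v := by
        have h := ineq_nm1 (y := a v) hn (by omega)
        simp only [gv, hau]
        omega
      rcases hw0or with hw | hw
      · have hw0mem : w0 ∈ (G.neighborFinset u).erase v :=
          Finset.mem_erase.2 ⟨hw0v, (G.mem_neighborFinset ..).2 hw⟩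
        have hguw : 2*n - 2 ≤ gv n a u w0 := by
          have h := ineq_nm1 (y := a w0) hn (by omega)
          simp only [gv, hau]
          omega
        exact hfinal huv (caseA1 G n a hn huv hw0mem hguv hguw hSu hSv)
      · have hw0mem : w0 ∈ (G.neighborFinset v).erase u :=
          Finset.mem_erase.2 ⟨hw0u, (G.mem_neighborFinset ..).2 hw⟩
        have hgvw : 2*n - 2 ≤ gv n a v w0 := by
          have h := ineq_nm1 (y := a w0) hn (by omega)
          simp only [gv, hav]
          omega
        exact hfinal huv.symm
          (caseA1 G n a hn huv.symm hw0mem ((gv_comm n a u v) ▸ hguv) hgvw hSv hSu)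
  · -- Case B : split vertices form an independent set
    push_neg at hAA
    set S : Finset V := Finset.univ.filter (fun u => 1 ≤ a u ∧ a u < n) with hS
    set X : Finset V := Finset.univ.filter (fun u => a u = n) with hX
    set e : V → ℕ := fun u => ((G.neighborFinset u).filter (fun w => a w = 0)).card with he
    set f : V → ℕ := fun u => ((G.neighborFinset u).filter (fun w => a w = n)).card with hf
    set P : Finset V := X ∪ S.filter (fun u => e u ≤ f u) with hP
    have hnosplit : ∀ {p q : V}, G.Adj p q → 1 ≤ a p → a p < n → (a q = 0 ∨ a q = n) := by
      intro p q hpq h1 h2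
      have h3 := hAA p q hpq ⟨h1, h2⟩
      have h4 := ha q
      omega
    have hPX : ∀ {w : V}, a w = n → w ∈ P := by
      intro w hw
      exact Finset.mem_union_left _ (Finset.mem_filter.2 ⟨Finset.mem_univ _, hw⟩)
    have hPS : ∀ {w : V}, 1 ≤ a w → a w < n → e w ≤ f w → w ∈ P := by
      intro w h1 h2 h3
      exact Finset.mem_union_right _
        (Finset.mem_filter.2 ⟨Finset.mem_filter.2 ⟨Finset.mem_univ _, h1, h2⟩, h3⟩)
    have hPmem : ∀ {w : V}, w ∈ P → (a w = n ∨ (1 ≤ a w ∧ a w < n ∧ e w ≤ f w)) := by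
      intro w hw
      rcases Finset.mem_union.1 hw with h | h
      · exact Or.inl (Finset.mem_filter.1 h).2
      · obtain ⟨h1, h2⟩ := Finset.mem_filter.1 h
        exact Or.inr ⟨(Finset.mem_filter.1 h1).2.1, (Finset.mem_filter.1 h1).2.2, h2⟩
    have hYnotP : ∀ {w : V}, a w = 0 → w ∉ P := by
      intro w hw hmem
      rcases hPmem hmem with h | h <;> omega
    have hef : ∀ {w : V}, 1 ≤ a w → a w < n → 1 ≤ e w ∧ 1 ≤ f w := by
      intro w h1 h2
      constructor
      · obtain ⟨z, hz1, hz2⟩ := Wm w h2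
        have h3 := hnosplit hz1 h1 h2
        refine Finset.card_pos.2 ⟨z, Finset.mem_filter.2
          ⟨(G.mem_neighborFinset ..).2 hz1, by omega⟩⟩
      · obtain ⟨z, hz1, hz2⟩ := Wp w h1
        have h3 := hnosplit hz1 h1 h2
        refine Finset.card_pos.2 ⟨z, Finset.mem_filter.2
          ⟨(G.mem_neighborFinset ..).2 hz1, by omega⟩⟩
    -- row sum at a split vertex
    have hrow : ∀ {w0 : V}, 1 ≤ a w0 → a w0 < n →
        n * ((G.neighborFinset w0).card + (n - 2)) ≤ ∑ z ∈ G.neighborFinset w0, gv n a w0 z := by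
      intro w0 h1 h2
      have hefw := hef h1 h2
      have hpart : ((G.neighborFinset w0).filter (fun w => a w = 0))
          ∪ ((G.neighborFinset w0).filter (fun w => a w = n)) = G.neighborFinset w0 := by
        ext z
        simp only [Finset.mem_union, Finset.mem_filter]
        constructor
        · rintro (⟨h, _⟩ | ⟨h, _⟩) <;> exact h
        · intro hz
          have := hnosplit ((G.mem_neighborFinset ..).1 hz) h1 h2
          rcases this with h | h
          · exact Or.inl ⟨hz, h⟩
          · exact Or.inr ⟨hz, h⟩
      have hdisj0n : Disjoint ((G.neighborFinset w0).filter (fun w => a w = 0))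
          ((G.neighborFinset w0).filter (fun w => a w = n)) := by
        rw [Finset.disjoint_left]
        intro z hz1 hz2
        have ha1 := (Finset.mem_filter.1 hz1).2
        have ha2 := (Finset.mem_filter.1 hz2).2
        omega
      have hsum : ∑ z ∈ G.neighborFinset w0, gv n a w0 z
          = e w0 * (a w0 * n) + f w0 * (n * (n - a w0)) := by
        rw [← hpart, Finset.sum_union hdisj0n]
        congr 1
        · rw [Finset.sum_congr rfl (fun z hz => ?_), Finset.sum_const, smul_eq_mul]
          have h0 : a z = 0 := (Finset.mem_filter.1 hz).2
          simp [gv, h0]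
        · rw [Finset.sum_congr rfl (fun z hz => ?_), Finset.sum_const, smul_eq_mul]
          have h0 : a z = n := (Finset.mem_filter.1 hz).2
          simp [gv, h0, Nat.sub_self]
      have hcard : (G.neighborFinset w0).card = e w0 + f w0 := by
        rw [← hpart, Finset.card_union_of_disjoint hdisj0n]
      rw [hsum, hcard]
      exact ineq_ef h1 h2 hefw.1 hefw.2
    by_cases hB1 : ∃ v, (a v = n ∧ ∀ w ∈ G.neighborFinset v, w ∉ P)
        ∨ (a v = 0 ∧ ∀ w ∈ G.neighborFinset v, w ∈ P)
    · -- an isolated vertex in the cut graph: heavy local count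
      left
      obtain ⟨v, hv⟩ := hB1
      rcases hv with ⟨hv1, hv2⟩ | ⟨hv1, hv2⟩
      · obtain ⟨w0, hvw0, hw0a⟩ := Wp v (by omega)
        have hw0mem : w0 ∈ G.neighborFinset v := (G.mem_neighborFinset ..).2 hvw0
        have hw0notP := hv2 w0 hw0mem
        have hw0n : a w0 < n := by
          rcases Nat.lt_or_ge (a w0) n with h | h
          · exact h
          · exact absurd (hPX (by have := ha w0; omega)) hw0notP
        have hz : ∀ z ∈ (G.neighborFinset v).erase w0, n ≤ gv n a v z := by
          intro z hzmem
          have hz1 := hv2 z (Finset.mem_of_mem_erase hzmem)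
          have hz2 : a z < n := by
            rcases Nat.lt_or_ge (a z) n with h | h
            · exact h
            · exact absurd (hPX (by have := ha z; omega)) hz1
          have : gv n a v z = n * (n - a z) := by
            simp [gv, hv1, Nat.sub_self]
          rw [this]
          exact Nat.le_mul_of_pos_right n (by omega)
        exact hfinal hvw0 (caseB1 G n a hn hvw0 hz (hrow hw0a hw0n))
      · obtain ⟨w0, hvw0, hw0a⟩ := Wm v (by omega)
        have hw0mem : w0 ∈ G.neighborFinset v := (G.mem_neighborFinset ..).2 hvw0
        have hw0P := hv2 w0 hw0mem
        have hw01 : 1 ≤ a w0 := by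
          rcases hPmem hw0P with h | h <;> omega
        have hz : ∀ z ∈ (G.neighborFinset v).erase w0, n ≤ gv n a v z := by
          intro z hzmem
          have hz1 := hv2 z (Finset.mem_of_mem_erase hzmem)
          have hz2 : 1 ≤ a z := by
            rcases hPmem hz1 with h | h <;> omega
          have : gv n a v z = a z * n := by
            simp [gv, hv1]
          rw [this]
          calc n = 1 * n := (one_mul n).symm
            _ ≤ a z * n := Nat.mul_le_mul_right _ hz2
        exact hfinal hvw0 (caseB1 G n a hn hvw0 hz (hrow hw01 hw0a))
    · -- the projected cut is a restricted edge-cut of G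
      right
      have hkeepn : ∀ v, a v = n → ∃ w ∈ G.neighborFinset v, w ∈ P := by
        intro v hv
        by_contra hcon
        push_neg at hcon
        exact hB1 ⟨v, Or.inl ⟨hv, hcon⟩⟩
      have hkeep0 : ∀ v, a v = 0 → ∃ w ∈ G.neighborFinset v, w ∉ P := by
        intro v hv
        by_contra hcon
        push_neg at hcon
        exact hB1 ⟨v, Or.inr ⟨hv, fun w hw => hcon w hw⟩⟩
      have hXne' : ∃ x, a x = n := by
        obtain ⟨u, hu⟩ := hXne
        rcases Nat.lt_or_ge (a u) n with h | h
        · obtain ⟨w, hw1, hw2⟩ := Wp u hu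
          have := hnosplit hw1 hu h
          exact ⟨w, by omega⟩
        · exact ⟨u, by have := ha u; omega⟩
      have hYne' : ∃ y, a y = 0 := by
        obtain ⟨u, hu⟩ := hYne
        rcases Nat.lt_or_ge 0 (a u) with h | h
        · obtain ⟨w, hw1, hw2⟩ := Wm u hu
          have := hnosplit hw1 h hu
          exact ⟨w, by omega⟩
        · exact ⟨u, by omega⟩
      set C : Finset (Sym2 V) := (ocross G P).image (fun p => s(p.1, p.2)) with hC
      have hCmem2 : ∀ {x y : V}, G.Adj x y → x ∈ P → y ∉ P → s(x,y) ∈ C := by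
        intro x y h1 h2 h3
        exact Finset.mem_image_of_mem _ (Finset.mem_filter.2
          ⟨Finset.mem_product.2 ⟨Finset.mem_univ _, Finset.mem_univ _⟩, h1, h2, h3⟩)
      have hCmem : ∀ {x y : V}, s(x,y) ∈ C → ¬(x ∈ P ↔ y ∈ P) := by
        intro x y hxy hiff
        obtain ⟨p, hp, heq⟩ := Finset.mem_image.1 hxy
        obtain ⟨-, _, h1, h2⟩ := Finset.mem_filter.1 hp
        rcases Sym2.eq_iff.1 heq with ⟨ha1, ha2⟩ | ⟨ha1, ha2⟩
        · exact h2 (ha2 ▸ (hiff.1 (ha1 ▸ h1)))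
        · exact h2 (ha2 ▸ (hiff.2 (ha1 ▸ h1)))
      have hdel_adj : ∀ {x y : V}, G.Adj x y → (x ∈ P ↔ y ∈ P) →
          (G.deleteEdges (↑C : Set (Sym2 V))).Adj x y := by
        intro x y h1 h2
        rw [SimpleGraph.deleteEdges_adj]
        exact ⟨h1, fun hc => hCmem (Finset.mem_coe.1 hc) h2⟩
      have hclosed : ∀ ⦃p q : V⦄, (G.deleteEdges (↑C : Set (Sym2 V))).Adj p q →
          p ∈ (↑P : Set V) → q ∈ (↑P : Set V) := by
        intro p q hpq hp
        rw [SimpleGraph.deleteEdges_adj] at hpq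
        by_contra hq
        exact hpq.2 (Finset.mem_coe.2
          (hCmem2 hpq.1 (Finset.mem_coe.1 hp) (fun h => hq (Finset.mem_coe.2 h))))
      refine ⟨C, ⟨?_, ?_, ?_⟩, ?_⟩
      · -- C ⊆ edgeSet
        intro ed hed
        obtain ⟨p, hp, rfl⟩ := Finset.mem_image.1 (Finset.mem_coe.1 hed)
        exact SimpleGraph.mem_edgeSet .. |>.2 (Finset.mem_filter.1 hp).2.1
      · -- not connected
        obtain ⟨x1, hx1⟩ := hXne'
        obtain ⟨y1, hy1⟩ := hYne'
        exact not_connected_of_closed hclosed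
          (Finset.mem_coe.2 (hPX hx1)) (fun h => hYnotP hy1 (Finset.mem_coe.1 h))
      · -- all components nontrivial
        refine nontrivial_supp_of_forall_adj (fun x => ?_)
        by_cases hxn : a x = n
        · obtain ⟨w, hw1, hw2⟩ := hkeepn x hxn
          exact ⟨w, hdel_adj ((G.mem_neighborFinset ..).1 hw1) (iff_of_true (hPX hxn) hw2)⟩
        by_cases hx0 : a x = 0
        · obtain ⟨w, hw1, hw2⟩ := hkeep0 x hx0
          exact ⟨w, hdel_adj ((G.mem_neighborFinset ..).1 hw1) (iff_of_false (hYnotP hx0) hw2)⟩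
        have hx1 : 1 ≤ a x := by omega
        have hx2 : a x < n := by have := ha x; omega
        by_cases hefx : e x ≤ f x
        · obtain ⟨w, hw1, hw2⟩ := Wp x hx1
          have hwn : a w = n := by have := hnosplit hw1 hx1 hx2; omega
          exact ⟨w, hdel_adj hw1 (iff_of_true (hPS hx1 hx2 hefx) (hPX hwn))⟩
        · obtain ⟨w, hw1, hw2⟩ := Wm x hx2
          have hw0 : a w = 0 := by have := hnosplit hw1 hx1 hx2; omega
          have hxP : x ∉ P := by
            intro hmem
            rcases hPmem hmem with h | h
            · omega
            · exact hefx h.2.2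
          exact ⟨w, hdel_adj hw1 (iff_of_false hxP (hYnotP hw0))⟩
      · -- the count
        have hCcard : C.card = (ocross G P).card := by
          refine sym2_image_card (ocross G P) (↑P : Set V) (fun p hp => ?_)
          obtain ⟨-, _, h1, h2⟩ := Finset.mem_filter.1 hp
          exact ⟨Finset.mem_coe.2 h1, fun h => h2 (Finset.mem_coe.1 h)⟩
        -- auxiliary: counting `X`-neighbours of a vertex
        have hXadjf : ∀ w, (X.filter (fun v => G.Adj v w)).card = f w := by
          intro w
          have hset : X.filter (fun v => G.Adj v w)
              = (G.neighborFinset w).filter (fun v => a v = n) := by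
            ext v
            simp only [Finset.mem_filter, hX, Finset.mem_univ, true_and,
              SimpleGraph.mem_neighborFinset]
            constructor
            · rintro ⟨h1, h2⟩; exact ⟨h2.symm, h1⟩
            · rintro ⟨h1, h2⟩; exact ⟨h2, h1.symm⟩
          rw [hset]
        set SX := S.filter (fun u => e u ≤ f u) with hSX
        set SY := S.filter (fun u => ¬ e u ≤ f u) with hSY
        have hsplitS : ∀ {w : V}, w ∈ S → 1 ≤ a w ∧ a w < n := by
          intro w hw
          exact (Finset.mem_filter.1 hw).2
        -- (i) cut cardinality bound
        have hcut : (ocross G P).card ≤ (∑ v ∈ X, e v) + ∑ w ∈ S, min (e w) (f w) := by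
          rw [ocross_card]
          have hPdisj : Disjoint X SX := by
            rw [Finset.disjoint_left]
            intro z hz1 hz2
            have h1 := (Finset.mem_filter.1 hz1).2
            have h2 := (hsplitS (Finset.mem_filter.1 hz2).1).2
            omega
          have hPsum : (∑ u ∈ P, ((G.neighborFinset u).filter (fun w => w ∉ P)).card)
              = (∑ u ∈ X, ((G.neighborFinset u).filter (fun w => w ∉ P)).card)
                + ∑ u ∈ SX, ((G.neighborFinset u).filter (fun w => w ∉ P)).card :=
            Finset.sum_union hPdisj
          rw [hPsum]
          have hXbound : ∑ v ∈ X, ((G.neighborFinset v).filter (fun w => w ∉ P)).card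
              ≤ (∑ v ∈ X, e v) + ∑ w ∈ SY, min (e w) (f w) := by
            have hstep : ∀ v ∈ X, ((G.neighborFinset v).filter (fun w => w ∉ P)).card
                ≤ e v + ((G.neighborFinset v).filter (· ∈ SY)).card := by
              intro v hv
              have hsub : (G.neighborFinset v).filter (fun w => w ∉ P)
                  ⊆ ((G.neighborFinset v).filter (fun w => a w = 0))
                    ∪ ((G.neighborFinset v).filter (· ∈ SY)) := by
                intro z hz
                obtain ⟨hzN, hzP⟩ := Finset.mem_filter.1 hz
                by_cases hzn : a z = n
                · exact absurd (hPX hzn) hzP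
                by_cases hz0 : a z = 0
                · exact Finset.mem_union_left _ (Finset.mem_filter.2 ⟨hzN, hz0⟩)
                have hz1 : 1 ≤ a z := by omega
                have hz2 : a z < n := by have := ha z; omega
                have hzef : ¬ e z ≤ f z := fun h => hzP (hPS hz1 hz2 h)
                exact Finset.mem_union_right _ (Finset.mem_filter.2 ⟨hzN,
                  Finset.mem_filter.2 ⟨Finset.mem_filter.2 ⟨Finset.mem_univ _, hz1, hz2⟩, hzef⟩⟩)
              calc ((G.neighborFinset v).filter (fun w => w ∉ P)).card
                  ≤ (((G.neighborFinset v).filter (fun w => a w = 0))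
                    ∪ ((G.neighborFinset v).filter (· ∈ SY))).card := Finset.card_le_card hsub
                _ ≤ e v + ((G.neighborFinset v).filter (· ∈ SY)).card := Finset.card_union_le _ _
            have hswap : ∑ v ∈ X, ((G.neighborFinset v).filter (· ∈ SY)).card
                = ∑ w ∈ SY, min (e w) (f w) := by
              have h1 : ∑ v ∈ X, ((G.neighborFinset v).filter (· ∈ SY)).card
                  = ∑ v ∈ X, ∑ w ∈ (G.neighborFinset v).filter (· ∈ SY), 1 := by
                refine Finset.sum_congr rfl fun v _ => Finset.card_eq_sum_ones _
              rw [h1, sum_nbr_swap G X SY (fun _ => 1)]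
              refine Finset.sum_congr rfl fun w hw => ?_
              have hfle : f w ≤ e w := le_of_not_ge (Finset.mem_filter.1 hw).2
              rw [one_mul, hXadjf w, Nat.min_eq_right hfle]
            calc ∑ v ∈ X, ((G.neighborFinset v).filter (fun w => w ∉ P)).card
                ≤ ∑ v ∈ X, (e v + ((G.neighborFinset v).filter (· ∈ SY)).card) :=
                  Finset.sum_le_sum hstep
              _ = (∑ v ∈ X, e v) + ∑ v ∈ X, ((G.neighborFinset v).filter (· ∈ SY)).card :=
                  Finset.sum_add_distrib
              _ = (∑ v ∈ X, e v) + ∑ w ∈ SY, min (e w) (f w) := by rw [hswap]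
          have hSXbound : ∑ u ∈ SX, ((G.neighborFinset u).filter (fun w => w ∉ P)).card
              ≤ ∑ u ∈ SX, min (e u) (f u) := by
            refine Finset.sum_le_sum fun u hu => ?_
            obtain ⟨huS, huef⟩ := Finset.mem_filter.1 hu
            have hu1 := (hsplitS huS).1
            have hu2 := (hsplitS huS).2
            have hsub : (G.neighborFinset u).filter (fun w => w ∉ P)
                ⊆ (G.neighborFinset u).filter (fun w => a w = 0) := by
              intro z hz
              obtain ⟨hzN, hzP⟩ := Finset.mem_filter.1 hz
              have := hnosplit ((G.mem_neighborFinset ..).1 hzN) hu1 hu2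
              rcases this with h | h
              · exact Finset.mem_filter.2 ⟨hzN, h⟩
              · exact absurd (hPX h) hzP
            calc ((G.neighborFinset u).filter (fun w => w ∉ P)).card
                ≤ e u := Finset.card_le_card hsub
              _ = min (e u) (f u) := (Nat.min_eq_left huef).symm
          have hSsum : (∑ u ∈ SX, min (e u) (f u)) + ∑ u ∈ SY, min (e u) (f u)
              = ∑ u ∈ S, min (e u) (f u) :=
            Finset.sum_filter_add_sum_filter_not S _ _
          omega
        -- (ii) count lower bound on Es
        have hEslow : n ^ 2 * ((∑ v ∈ X, e v) + ∑ w ∈ S, min (e w) (f w)) ≤ Es := by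
          have hdisjXS : Disjoint X S := by
            rw [Finset.disjoint_left]
            intro z hz1 hz2
            have h1 := (Finset.mem_filter.1 hz1).2
            have h2 := (hsplitS hz2).2
            omega
          have hEsplit : (∑ u ∈ X, ∑ y : V, qa G n a u y) + (∑ u ∈ S, ∑ y : V, qa G n a u y)
              ≤ Es := by
            rw [← Finset.sum_union hdisjXS]
            exact Finset.sum_le_sum_of_subset (Finset.subset_univ _)
          have hrowX : ∀ v ∈ X, e v * (n * n)
              + (∑ w ∈ (G.neighborFinset v).filter (· ∈ S), n * (n - a w))
              ≤ ∑ y : V, qa G n a v y := by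
            intro v hv
            have hav : a v = n := (Finset.mem_filter.1 hv).2
            rw [row_eq]
            have hcongr : ∀ w ∈ G.neighborFinset v, a v * (n - a w) = n * (n - a w) := by
              intro w _
              rw [hav]
            rw [Finset.sum_congr rfl hcongr]
            have hdisj2 : Disjoint ((G.neighborFinset v).filter (fun w => a w = 0))
                ((G.neighborFinset v).filter (· ∈ S)) := by
              rw [Finset.disjoint_left]
              intro z hz1 hz2
              have h1 := (Finset.mem_filter.1 hz1).2
              have h2 := (hsplitS (Finset.mem_filter.1 hz2).2).1
              omega
            have hsub2 : ((G.neighborFinset v).filter (fun w => a w = 0))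
                ∪ ((G.neighborFinset v).filter (· ∈ S)) ⊆ G.neighborFinset v := by
              intro z hz
              rcases Finset.mem_union.1 hz with h | h
              · exact (Finset.mem_filter.1 h).1
              · exact (Finset.mem_filter.1 h).1
            calc e v * (n * n) + (∑ w ∈ (G.neighborFinset v).filter (· ∈ S), n * (n - a w))
                = (∑ w ∈ (G.neighborFinset v).filter (fun w => a w = 0), n * (n - a w))
                  + (∑ w ∈ (G.neighborFinset v).filter (· ∈ S), n * (n - a w)) := by
                  congr 1
                  rw [Finset.sum_congr rfl (fun w hw => ?_), Finset.sum_const, smul_eq_mul]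
                  · rw [(Finset.mem_filter.1 hw).2, Nat.sub_zero]
              _ = ∑ w ∈ ((G.neighborFinset v).filter (fun w => a w = 0))
                    ∪ ((G.neighborFinset v).filter (· ∈ S)), n * (n - a w) :=
                  (Finset.sum_union hdisj2).symm
              _ ≤ ∑ w ∈ G.neighborFinset v, n * (n - a w) :=
                  Finset.sum_le_sum_of_subset hsub2
          have hrowS : ∀ u ∈ S, e u * (a u * n) ≤ ∑ y : V, qa G n a u y := by
            intro u hu
            rw [row_eq]
            have hsub3 : (G.neighborFinset u).filter (fun w => a w = 0)
                ⊆ G.neighborFinset u := Finset.filter_subset _ _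
            calc e u * (a u * n)
                = ∑ w ∈ (G.neighborFinset u).filter (fun w => a w = 0), a u * (n - a w) := by
                  rw [Finset.sum_congr rfl (fun w hw => ?_), Finset.sum_const, smul_eq_mul]
                  · rw [(Finset.mem_filter.1 hw).2, Nat.sub_zero]
              _ ≤ ∑ w ∈ G.neighborFinset u, a u * (n - a w) :=
                  Finset.sum_le_sum_of_subset hsub3
          have hswap2 : ∑ v ∈ X, ∑ w ∈ (G.neighborFinset v).filter (· ∈ S), n * (n - a w)
              = ∑ w ∈ S, n * (n - a w) * f w := by
            rw [sum_nbr_swap G X S (fun w => n * (n - a w))]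
            refine Finset.sum_congr rfl fun w _ => ?_
            rw [hXadjf w]
          have hXsum : (∑ v ∈ X, e v * (n * n))
              + (∑ w ∈ S, n * (n - a w) * f w)
              ≤ ∑ u ∈ X, ∑ y : V, qa G n a u y := by
            rw [← hswap2, ← Finset.sum_add_distrib]
            exact Finset.sum_le_sum hrowX
          have hSsum2 : ∑ u ∈ S, e u * (a u * n) ≤ ∑ u ∈ S, ∑ y : V, qa G n a u y :=
            Finset.sum_le_sum hrowS
          have hmin : ∀ w ∈ S, n ^ 2 * min (e w) (f w)
              ≤ n * (n - a w) * f w + e w * (a w * n) := by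
            intro w hw
            exact ineq_min2 (le_of_lt (hsplitS hw).2)
          calc n ^ 2 * ((∑ v ∈ X, e v) + ∑ w ∈ S, min (e w) (f w))
              = (∑ v ∈ X, n ^ 2 * e v) + ∑ w ∈ S, n ^ 2 * min (e w) (f w) := by
                rw [Nat.mul_add, Finset.mul_sum, Finset.mul_sum]
            _ ≤ (∑ v ∈ X, e v * (n * n))
                + ∑ w ∈ S, (n * (n - a w) * f w + e w * (a w * n)) := by
                refine Nat.add_le_add (Finset.sum_le_sum fun v _ => le_of_eq (by ring))
                  (Finset.sum_le_sum hmin)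
            _ = ((∑ v ∈ X, e v * (n * n)) + ∑ w ∈ S, n * (n - a w) * f w)
                + ∑ w ∈ S, e w * (a w * n) := by
                rw [Finset.sum_add_distrib]
                ring
            _ ≤ (∑ u ∈ X, ∑ y : V, qa G n a u y) + (∑ u ∈ S, ∑ y : V, qa G n a u y) :=
                Nat.add_le_add hXsum hSsum2
            _ ≤ Es := hEsplit
        calc n ^ 2 * C.card
            = n ^ 2 * (ocross G P).card := by rw [hCcard]
          _ ≤ n ^ 2 * ((∑ v ∈ X, e v) + ∑ w ∈ S, min (e w) (f w)) :=
              Nat.mul_le_mul_left _ hcut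
          _ ≤ Es := hEslow

end Core

section Product
variable {V : Type*} [Fintype V] [DecidableEq V]

private instance totalProdDecidable (G : SimpleGraph V) [DecidableRel G.Adj] (n : ℕ) :
    DecidableRel (totalProd G n).Adj := fun x y => ‹DecidableRel G.Adj› x.1 y.1

omit [Fintype V] [DecidableEq V] in
private lemma totalProd_adj {G : SimpleGraph V} {n : ℕ} {x y : V × Fin n} :
    (totalProd G n).Adj x y ↔ G.Adj x.1 y.1 := Iff.rfl

omit [DecidableEq V] in
private lemma exists_nbr {G : SimpleGraph V} (hG : G.Connected)
    (hV : 2 ≤ Fintype.card V) (u : V) : ∃ w, G.Adj u w := by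
  obtain ⟨v, hv⟩ := Fintype.exists_ne_of_one_lt_card (by omega) u
  exact exists_adj_of_mem_reach (hG.preconnected u v) (Ne.symm hv)

omit [DecidableEq V] in
private lemma ncard_nbr (G : SimpleGraph V) [DecidableRel G.Adj] (u : V) :
    (G.neighborSet u).ncard = (G.neighborFinset u).card := by
  rw [SimpleGraph.neighborFinset_def, Set.ncard_eq_toFinset_card']

omit [DecidableEq V] in
private lemma exists_min_edge {G : SimpleGraph V} [DecidableRel G.Adj] (hG : G.Connected)
    (hV : 2 ≤ Fintype.card V) :
    ∃ u v, G.Adj u v ∧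
      (G.neighborFinset u).card + (G.neighborFinset v).card = minEdgeDegree G + 2 := by
  have hne : {k | ∃ u v, G.Adj u v ∧
      (G.neighborSet u).ncard + (G.neighborSet v).ncard - 2 = k}.Nonempty := by
    obtain ⟨u⟩ := hG.nonempty
    obtain ⟨w, hw⟩ := exists_nbr hG hV u
    exact ⟨_, u, w, hw, rfl⟩
  have hmem := Nat.sInf_mem hne
  obtain ⟨u, v, huv, hval⟩ := hmem
  refine ⟨u, v, huv, ?_⟩
  rw [ncard_nbr, ncard_nbr] at hval
  have hu : 1 ≤ (G.neighborFinset u).card :=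
    Finset.card_pos.2 ⟨v, (G.mem_neighborFinset ..).2 huv⟩
  have hv' : 1 ≤ (G.neighborFinset v).card :=
    Finset.card_pos.2 ⟨u, (G.mem_neighborFinset ..).2 huv.symm⟩
  have : minEdgeDegree G
      = (G.neighborFinset u).card + (G.neighborFinset v).card - 2 := hval.symm
  omega

private lemma totalProd_nbrFinset (G : SimpleGraph V) [DecidableRel G.Adj] (n : ℕ)
    (x : V × Fin n) :
    (totalProd G n).neighborFinset x = (G.neighborFinset x.1) ×ˢ Finset.univ := by
  ext ⟨w, j⟩
  simp only [SimpleGraph.mem_neighborFinset, Finset.mem_product, Finset.mem_univ, and_true]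
  exact totalProd_adj

private lemma totalProd_deg (G : SimpleGraph V) [DecidableRel G.Adj] (n : ℕ)
    (x : V × Fin n) :
    ((totalProd G n).neighborFinset x).card = (G.neighborFinset x.1).card * n := by
  rw [totalProd_nbrFinset, Finset.card_product, Finset.card_univ, Fintype.card_fin]

private lemma upper_bound (G : SimpleGraph V) [DecidableRel G.Adj] (hG : G.Connected)
    (hV : 2 ≤ Fintype.card V) (n : ℕ) (hn : 3 ≤ n) :
    restrictedEdgeConn (totalProd G n)
      ≤ ((n * minEdgeDegree G + 2 * (n - 1) : ℕ) : ℕ∞) := by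
  classical
  obtain ⟨u, v, huv, hsum⟩ := exists_min_edge hG hV
  set H := totalProd G n with hH
  have i0 : (0 : ℕ) < n := by omega
  set x : V × Fin n := (u, ⟨0, i0⟩) with hx
  set y : V × Fin n := (v, ⟨0, i0⟩) with hy
  have hxy : H.Adj x y := huv
  have hxny : x ≠ y := H.ne_of_adj hxy
  set F : Finset (Sym2 (V × Fin n)) :=
    (H.incidenceFinset x ∪ H.incidenceFinset y).erase s(x,y) with hF
  -- membership facts
  have hincx : ∀ e, e ∈ H.incidenceFinset x ↔ e ∈ H.edgeSet ∧ x ∈ e := by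
    intro e
    rw [SimpleGraph.mem_incidenceFinset]
    exact Iff.rfl
  have hincy : ∀ e, e ∈ H.incidenceFinset y ↔ e ∈ H.edgeSet ∧ y ∈ e := by
    intro e
    rw [SimpleGraph.mem_incidenceFinset]
    exact Iff.rfl
  have hFmem : ∀ {p q : V × Fin n}, s(p,q) ∈ F → (x = p ∨ x = q) ∨ (y = p ∨ y = q) := by
    intro p q hpq
    have h1 := Finset.mem_of_mem_erase hpq
    rcases Finset.mem_union.1 h1 with h | h
    · exact Or.inl (Sym2.mem_iff.1 ((hincx _).1 h).2)
    · exact Or.inr (Sym2.mem_iff.1 ((hincy _).1 h).2)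
  have hFxy : s(x,y) ∉ F := Finset.notMem_erase _ _
  have hFadj : ∀ {p q : V × Fin n}, H.Adj p q → p ≠ x → p ≠ y → q ≠ x → q ≠ y →
      s(p,q) ∉ F := by
    intro p q _ h1 h2 h3 h4 hmem
    rcases hFmem hmem with (h | h) | (h | h)
    · exact h1 h.symm
    · exact h3 h.symm
    · exact h2 h.symm
    · exact h4 h.symm
  -- the cut property
  have hcut : IsRestrictedEdgeCut H ↑F := by
    refine ⟨?_, ?_, ?_⟩
    · intro e he
      have h1 := Finset.mem_of_mem_erase (Finset.mem_coe.1 he)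
      rcases Finset.mem_union.1 h1 with h | h
      · exact ((hincx _).1 h).1
      · exact ((hincy _).1 h).1
    · -- disconnected
      have hcl : ∀ ⦃p q : V × Fin n⦄, (H.deleteEdges ↑F).Adj p q →
          p ∈ ({x, y} : Set (V × Fin n)) → q ∈ ({x, y} : Set (V × Fin n)) := by
        intro p q hpq hp
        rw [SimpleGraph.deleteEdges_adj] at hpq
        have hadj := hpq.1
        have hinc : s(p,q) ∈ H.incidenceFinset x ∪ H.incidenceFinset y := by
          rcases hp with rfl | rfl
          · exact Finset.mem_union_left _ ((hincx _).2 ⟨hadj, Sym2.mem_mk_left _ _⟩)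
          · exact Finset.mem_union_right _ ((hincy _).2 ⟨hadj, Sym2.mem_mk_left _ _⟩)
        have heq : s(p,q) = s(x,y) := by
          by_contra hne
          exact hpq.2 (Finset.mem_coe.2 (Finset.mem_erase.2 ⟨hne, hinc⟩))
        rcases Sym2.eq_iff.1 heq with ⟨h1, h2⟩ | ⟨h1, h2⟩
        · exact Or.inr h2
        · exact Or.inl h2
      have hzK : ((u, (⟨1, by omega⟩ : Fin n)) : V × Fin n) ∉ ({x, y} : Set (V × Fin n)) := by
        intro hmem
        rcases hmem with h | h
        · rw [hx] at h
          have := congrArg (fun p => (p.2 : ℕ)) h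
          simp at this
        · rw [hy] at h
          have := congrArg (fun p => (p.2 : ℕ)) h
          simp at this
      exact not_connected_of_closed hcl (Set.mem_insert _ _) hzK
    · -- components nontrivial
      refine nontrivial_supp_of_forall_adj (fun p => ?_)
      by_cases hp1 : p = x
      · subst hp1
        exact ⟨y, (SimpleGraph.deleteEdges_adj ..).2 ⟨hxy, fun h => hFxy (Finset.mem_coe.1 h)⟩⟩
      by_cases hp2 : p = y
      · subst hp2
        refine ⟨x, (SimpleGraph.deleteEdges_adj ..).2 ⟨hxy.symm, fun h => hFxy ?_⟩⟩
        rw [Sym2.eq_swap] at h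
        exact Finset.mem_coe.1 h
      · obtain ⟨w', hw'⟩ := exists_nbr hG hV p.1
        set q : V × Fin n := (w', ⟨1, by omega⟩) with hq
        have hadj : H.Adj p q := hw'
        have hqx : q ≠ x := by
          intro h
          rw [hq, hx] at h
          have := congrArg (fun r => (r.2 : ℕ)) h
          simp at this
        have hqy : q ≠ y := by
          intro h
          rw [hq, hy] at h
          have := congrArg (fun r => (r.2 : ℕ)) h
          simp at this
        exact ⟨q, (SimpleGraph.deleteEdges_adj ..).2
          ⟨hadj, fun h => hFadj hadj hp1 hp2 hqx hqy (Finset.mem_coe.1 h)⟩⟩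
  -- cardinality
  have hinter : H.incidenceFinset x ∩ H.incidenceFinset y = {s(x,y)} := by
    ext e
    constructor
    · intro he
      obtain ⟨hex, hey⟩ := Finset.mem_inter.1 he
      obtain ⟨he1, hxe⟩ := (hincx e).1 hex
      obtain ⟨-, hye⟩ := (hincy e).1 hey
      induction e with
      | _ p q =>
        rw [Finset.mem_singleton]
        rcases Sym2.mem_iff.1 hxe with h1 | h1 <;> rcases Sym2.mem_iff.1 hye with h2 | h2
        · exact absurd (h1.trans h2.symm) hxny
        · rw [← h1, ← h2]
        · rw [← h1, ← h2]
          exact Sym2.eq_swap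
        · exact absurd (h1.trans h2.symm) hxny
    · intro he
      rw [Finset.mem_singleton.1 he]
      exact Finset.mem_inter.2
        ⟨(hincx _).2 ⟨hxy, Sym2.mem_mk_left _ _⟩,
         (hincy _).2 ⟨hxy, Sym2.mem_mk_right _ _⟩⟩
  have hunion_card : (H.incidenceFinset x ∪ H.incidenceFinset y).card
      = (G.neighborFinset u).card * n + (G.neighborFinset v).card * n - 1 := by
    have h1 := Finset.card_union_add_card_inter (H.incidenceFinset x) (H.incidenceFinset y)
    rw [hinter, Finset.card_singleton] at h1
    have h2 : (H.incidenceFinset x).card = (G.neighborFinset u).card * n := by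
      rw [SimpleGraph.card_incidenceFinset_eq_degree, SimpleGraph.degree, totalProd_deg]
    have h3 : (H.incidenceFinset y).card = (G.neighborFinset v).card * n := by
      rw [SimpleGraph.card_incidenceFinset_eq_degree, SimpleGraph.degree, totalProd_deg]
    omega
  have hxy_mem : s(x,y) ∈ H.incidenceFinset x ∪ H.incidenceFinset y :=
    Finset.mem_union_left _ ((hincx _).2 ⟨hxy, Sym2.mem_mk_left _ _⟩)
  have hFcard : F.card = n * minEdgeDegree G + 2 * (n - 1) := by
    rw [hF, Finset.card_erase_of_mem hxy_mem, hunion_card]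
    have hdu : 1 ≤ (G.neighborFinset u).card :=
      Finset.card_pos.2 ⟨v, (G.mem_neighborFinset ..).2 huv⟩
    have hdv : 1 ≤ (G.neighborFinset v).card :=
      Finset.card_pos.2 ⟨u, (G.mem_neighborFinset ..).2 huv.symm⟩
    have hmul : (G.neighborFinset u).card * n + (G.neighborFinset v).card * n
        = (minEdgeDegree G + 2) * n := by
      rw [← Nat.add_mul, hsum]
    rw [hmul]
    have : (minEdgeDegree G + 2) * n = n * minEdgeDegree G + 2 * n := by ring
    omega
  calc restrictedEdgeConn (totalProd G n) ≤ (F.card : ℕ∞) :=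
        sInf_le ⟨F, hcut, rfl⟩
    _ = _ := by rw [hFcard]

end Product

theorem stmt10 {V : Type*} [Fintype V] (G : SimpleGraph V) (hG : G.Connected)
    (hV : 2 ≤ Fintype.card V) (n : ℕ) (hn : 3 ≤ n)
    (h : ((n * minEdgeDegree G + 2 * (n - 1) : ℕ) : ℕ∞) <
      ((n ^ 2 : ℕ) : ℕ∞) * restrictedEdgeConn G) :
    SuperRestrictedEdgeConnected (totalProd G n) := by
  classical
  intro F hF hFmin
  by_contra hcon
  obtain ⟨hFsub, hFdis, hFnontriv⟩ := hF
  set Gd := (totalProd G n).deleteEdges (↑F : Set (Sym2 (V × Fin n))) with hGd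
  have hGdAdj : ∀ {p q : V × Fin n}, Gd.Adj p q → G.Adj p.1 q.1 := by
    intro p q hpq
    exact ((SimpleGraph.deleteEdges_adj ..).1 hpq).1
  -- no component is exactly a pair
  have hbig : ∀ p q : V × Fin n, (Gd.connectedComponentMk p).supp ⊆ {p, q} → False := by
    intro p q hsub
    obtain ⟨s1, hs1, s2, hs2, hne⟩ := hFnontriv (Gd.connectedComponentMk p)
    have hpmem : p ∈ (Gd.connectedComponentMk p).supp :=
      (ConnectedComponent.mem_supp_iff _ _).2 rfl
    have hpq : p ≠ q := by
      rintro rfl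
      have h1 := hsub hs1
      have h2 := hsub hs2
      simp only [Set.mem_insert_iff, Set.mem_singleton_iff, or_self] at h1 h2
      exact hne (h1.trans h2.symm)
    have hqmem : q ∈ (Gd.connectedComponentMk p).supp := by
      rcases hsub hs1 with h1 | h1 <;> rcases hsub hs2 with h2 | h2
      · exact absurd ((h1 : s1 = p).trans (h2 : s2 = p).symm) hne
      · exact (h2 : s2 = q) ▸ hs2
      · exact (h1 : s1 = q) ▸ hs1
      · exact (h1 : s1 = q) ▸ hs1
    have hsupp_eq : (Gd.connectedComponentMk p).supp = {p, q} := by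
      refine Set.Subset.antisymm hsub ?_
      rintro z (rfl | rfl)
      · exact hpmem
      · exact hqmem
    have hreach : Gd.Reachable p q :=
      (ConnectedComponent.exact ((ConnectedComponent.mem_supp_iff _ _).1 hqmem)).symm
    obtain ⟨w⟩ := hreach
    have hadjpq : Gd.Adj p q := by
      cases w with
      | nil => exact absurd rfl hpq
      | @cons _ z _ hstep w' =>
        have hzmem : z ∈ (Gd.connectedComponentMk p).supp :=
          (ConnectedComponent.mem_supp_iff _ _).2
            (ConnectedComponent.connectedComponentMk_eq_of_adj hstep.symm)
        rcases hsupp_eq ▸ hzmem with h1 | h1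
        · exact absurd (h1 : z = p) hstep.ne'
        · exact (h1 : z = q) ▸ hstep
    exact hcon ⟨p, q, hadjpq, hsupp_eq⟩
  -- pick a component and the complementary side
  haveI hne1 : Nonempty (V × Fin n) := by
    have h1 : 0 < Fintype.card V := by omega
    obtain ⟨v0⟩ := Fintype.card_pos_iff.1 h1
    exact ⟨(v0, ⟨0, by omega⟩)⟩
  have hnp : ¬ Gd.Preconnected := fun hpre => hFdis ⟨hpre⟩
  rw [SimpleGraph.Preconnected] at hnp
  push_neg at hnp
  obtain ⟨x0, y0, hnr⟩ := hnp
  set A : Finset (V × Fin n) :=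
    Finset.univ.filter (fun z => z ∈ (Gd.connectedComponentMk x0).supp) with hA
  have hAmem : ∀ {z : V × Fin n},
      z ∈ A ↔ Gd.connectedComponentMk z = Gd.connectedComponentMk x0 := by
    intro z
    rw [hA, Finset.mem_filter]
    simp [ConnectedComponent.mem_supp_iff]
  have hAx0 : x0 ∈ A := hAmem.2 rfl
  have hAy0 : y0 ∉ A := by
    intro hy
    exact hnr (ConnectedComponent.exact (hAmem.1 hy)).symm
  -- adjacency closure of A
  have hAc : ∀ {p q : V × Fin n}, Gd.Adj p q → p ∈ A → q ∈ A := by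
    intro p q hpq hp
    rw [hAmem] at hp ⊢
    rw [← hp]
    exact ConnectedComponent.connectedComponentMk_eq_of_adj hpq.symm
  have hAc' : ∀ {p q : V × Fin n}, Gd.Adj p q → p ∉ A → q ∉ A := by
    intro p q hpq hp hq
    exact hp (hAc hpq.symm hq)
  -- crossing edges lie in F
  have hcross : ∀ {p q : V × Fin n}, (totalProd G n).Adj p q → p ∈ A → q ∉ A →
      s(p,q) ∈ F := by
    intro p q hadj hp hq
    by_contra hmem
    exact hq (hAc ((SimpleGraph.deleteEdges_adj ..).2
      ⟨hadj, fun hc => hmem (Finset.mem_coe.1 hc)⟩) hp)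
  -- every vertex has a neighbour in the deleted graph
  have hGdnbr : ∀ x : V × Fin n, ∃ y, Gd.Adj x y := fun x =>
    exists_adj_of_supp_nontrivial (hFnontriv (Gd.connectedComponentMk x))
  -- the abstract count on G
  set a : V → ℕ := aCard A with ha'
  have hEsF : (∑ x : V, ∑ y : V, qa G n a x y) ≤ F.card := by
    rw [← crossPairs_card]
    have himg : (crossPairs G n A).image (fun p => s(p.1, p.2)) ⊆ F := by
      intro ed hed
      obtain ⟨p, hp, rfl⟩ := Finset.mem_image.1 hed
      obtain ⟨-, h1, h2, h3⟩ := Finset.mem_filter.1 hp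
      exact hcross h1 h2 h3
    have hcardimg : ((crossPairs G n A).image (fun p => s(p.1, p.2))).card
        = (crossPairs G n A).card := by
      refine sym2_image_card _ (↑A : Set (V × Fin n)) (fun p hp => ?_)
      obtain ⟨-, _, h2, h3⟩ := Finset.mem_filter.1 hp
      exact ⟨Finset.mem_coe.2 h2, fun hc => h3 (Finset.mem_coe.1 hc)⟩
    calc (crossPairs G n A).card
        = ((crossPairs G n A).image (fun p => s(p.1, p.2))).card := hcardimg.symm
      _ ≤ F.card := Finset.card_le_card himg
  -- interface facts
  have hXne : ∃ u, 1 ≤ a u := ⟨x0.1, (aCard_pos A x0.1).2 ⟨x0.2, hAx0⟩⟩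
  have hYne : ∃ u, a u < n := ⟨y0.1, (aCard_lt A y0.1).2 ⟨y0.2, hAy0⟩⟩
  have Wp : ∀ u, 1 ≤ a u → ∃ w, G.Adj u w ∧ 1 ≤ a w := by
    intro u hu
    obtain ⟨i, hi⟩ := (aCard_pos A u).1 hu
    obtain ⟨y, hy⟩ := hGdnbr (u, i)
    refine ⟨y.1, hGdAdj hy, (aCard_pos A y.1).2 ⟨y.2, ?_⟩⟩
    exact hAc hy hi
  have Wm : ∀ u, a u < n → ∃ w, G.Adj u w ∧ a w < n := by
    intro u hu
    obtain ⟨i, hi⟩ := (aCard_lt A u).1 hu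
    obtain ⟨y, hy⟩ := hGdnbr (u, i)
    refine ⟨y.1, hGdAdj hy, (aCard_lt A y.1).2 ⟨y.2, ?_⟩⟩
    exact hAc' hy hi
  have T3p : ∀ u v, G.Adj u v → a u = 1 → a v = 1 →
      ∃ w, (G.Adj u w ∨ G.Adj v w) ∧ w ≠ u ∧ w ≠ v ∧ 1 ≤ a w := by
    intro u v huv hau hav
    by_contra hnone
    push_neg at hnone
    obtain ⟨i, hi⟩ := (aCard_pos A u).1 (by rw [← ha']; omega)
    obtain ⟨j, hj⟩ := (aCard_pos A v).1 (by rw [← ha']; omega)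
    have hclK : ∀ p ∈ ({((u,i) : V × Fin n), (v,j)} : Set (V × Fin n)), ∀ q,
        Gd.Adj p q → q ∈ ({((u,i) : V × Fin n), (v,j)} : Set (V × Fin n)) := by
      rintro p (rfl | rfl) q hq
      · have hqA : q ∈ A := hAc hq hi
        have hadjq : G.Adj u q.1 := hGdAdj hq
        have hq1 : 1 ≤ a q.1 := (aCard_pos A q.1).2 ⟨q.2, hqA⟩
        have hqv : q.1 = v := by
          by_contra hne
          have := hnone q.1 (Or.inl hadjq) (G.ne_of_adj hadjq).symm hne
          omega
        have hq2 : q.2 = j := by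
          refine aCard_unique_mem (A := A) (u := v) (le_of_eq hav) ?_ hj
          rw [← hqv]
          exact hqA
        have hq3 : q = (v, j) := by rw [← hqv, ← hq2]
        rw [hq3]
        exact Set.mem_insert_of_mem _ rfl
      · have hqA : q ∈ A := hAc hq hj
        have hadjq : G.Adj v q.1 := hGdAdj hq
        have hq1 : 1 ≤ a q.1 := (aCard_pos A q.1).2 ⟨q.2, hqA⟩
        have hqu : q.1 = u := by
          by_contra hne
          have := hnone q.1 (Or.inr hadjq) hne (G.ne_of_adj hadjq).symm
          omega
        have hq2 : q.2 = i := by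
          refine aCard_unique_mem (A := A) (u := u) (le_of_eq hau) ?_ hi
          rw [← hqu]
          exact hqA
        have hq3 : q = (u, i) := by rw [← hqu, ← hq2]
        rw [hq3]
        exact Set.mem_insert _ _
    exact hbig (u,i) (v,j)
      (supp_subset_closed (fun p q hpq hp => hclK p hp q hpq) (Set.mem_insert _ _))
  have T3m : ∀ u v, G.Adj u v → a u = n - 1 → a v = n - 1 →
      ∃ w, (G.Adj u w ∨ G.Adj v w) ∧ w ≠ u ∧ w ≠ v ∧ a w < n := by
    intro u v huv hau hav
    by_contra hnone
    push_neg at hnone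
    have hnone' : ∀ w, (G.Adj u w ∨ G.Adj v w) → w ≠ u → w ≠ v → a w = n := by
      intro w h1 h2 h3
      have h4 := hnone w h1 h2 h3
      have h5 := aCard_le A w
      rw [← ha'] at h5
      omega
    obtain ⟨i, hi⟩ := (aCard_lt A u).1 (by rw [← ha']; omega)
    obtain ⟨j, hj⟩ := (aCard_lt A v).1 (by rw [← ha']; omega)
    have hclK : ∀ p ∈ ({((u,i) : V × Fin n), (v,j)} : Set (V × Fin n)), ∀ q,
        Gd.Adj p q → q ∈ ({((u,i) : V × Fin n), (v,j)} : Set (V × Fin n)) := by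
      rintro p (rfl | rfl) q hq
      · have hqA : q ∉ A := hAc' hq hi
        have hadjq : G.Adj u q.1 := hGdAdj hq
        have hq1 : a q.1 < n := (aCard_lt A q.1).2 ⟨q.2, hqA⟩
        have hqv : q.1 = v := by
          by_contra hne
          have := hnone' q.1 (Or.inl hadjq) (G.ne_of_adj hadjq).symm hne
          omega
        have hq2 : q.2 = j := by
          refine aCard_unique_not (A := A) (u := v) (by rw [← ha']; omega) ?_ hj
          rw [← hqv]
          exact hqA
        have hq3 : q = (v, j) := by rw [← hqv, ← hq2]
        rw [hq3]
        exact Set.mem_insert_of_mem _ rfl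
      · have hqA : q ∉ A := hAc' hq hj
        have hadjq : G.Adj v q.1 := hGdAdj hq
        have hq1 : a q.1 < n := (aCard_lt A q.1).2 ⟨q.2, hqA⟩
        have hqu : q.1 = u := by
          by_contra hne
          have := hnone' q.1 (Or.inr hadjq) hne (G.ne_of_adj hadjq).symm
          omega
        have hq2 : q.2 = i := by
          refine aCard_unique_not (A := A) (u := u) (by rw [← ha']; omega) ?_ hi
          rw [← hqu]
          exact hqA
        have hq3 : q = (u, i) := by rw [← hqu, ← hq2]
        rw [hq3]
        exact Set.mem_insert _ _
    exact hbig (u,i) (v,j)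
      (supp_subset_closed (fun p q hpq hp => hclK p hp q hpq) (Set.mem_insert _ _))
  have hξ : ∀ u v, G.Adj u v → minEdgeDegree G + 2
      ≤ (G.neighborFinset u).card + (G.neighborFinset v).card := by
    intro u v huv
    have hmemξ : ((G.neighborSet u).ncard + (G.neighborSet v).ncard - 2) ∈
        {k | ∃ u v, G.Adj u v ∧ (G.neighborSet u).ncard + (G.neighborSet v).ncard - 2 = k} :=
      ⟨u, v, huv, rfl⟩
    have h1 : minEdgeDegree G ≤ (G.neighborSet u).ncard + (G.neighborSet v).ncard - 2 :=
      Nat.sInf_le hmemξ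
    rw [ncard_nbr, ncard_nbr] at h1
    have hdu : 1 ≤ (G.neighborFinset u).card :=
      Finset.card_pos.2 ⟨v, (G.mem_neighborFinset ..).2 huv⟩
    have hdv : 1 ≤ (G.neighborFinset v).card :=
      Finset.card_pos.2 ⟨u, (G.mem_neighborFinset ..).2 huv.symm⟩
    omega
  -- upper bound on |F|
  have hub := upper_bound G hG hV n hn
  have hFle : F.card ≤ n * minEdgeDegree G + 2 * (n - 1) := by
    rw [← hFmin] at hub
    exact_mod_cast hub
  -- conclude via the core counting lemma
  rcases core G n a hn (aCard_le A) (minEdgeDegree G) hξ Wp Wm T3p T3m hXne hYne with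
    hcore | ⟨C, hCcut, hCcount⟩
  · have : (∑ x : V, ∑ y : V, qa G n a x y) ≤ n * minEdgeDegree G + 2 * (n - 1) :=
      le_trans hEsF hFle
    omega
  · have h1 : ((n ^ 2 : ℕ) : ℕ∞) * restrictedEdgeConn G ≤ ((n ^ 2 * C.card : ℕ) : ℕ∞) := by
      rw [Nat.cast_mul]
      have hmemC : ((C.card : ℕ∞)) ∈ {k : ℕ∞ | ∃ F : Finset (Sym2 V),
          IsRestrictedEdgeCut G ↑F ∧ (F.card : ℕ∞) = k} := ⟨C, hCcut, rfl⟩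
      exact mul_le_mul_right (sInf_le hmemC) _
    have h2 : (n ^ 2 * C.card : ℕ) ≤ n * minEdgeDegree G + 2 * (n - 1) :=
      le_trans hCcount (le_trans hEsF hFle)
    exact absurd (lt_of_lt_of_le h (le_trans h1 (Nat.cast_le.2 h2))) (lt_irrefl _)
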